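/- Let N ≥ 1 and 0 ≤ r ≤ N. Let H be an N×N symmetric complex matrix and V an N×r complex matrix such that the null space {x ∈ ℂ^N : Hx = 0} equals the column space of V. For an r-element subset I ⊆ {1,…,N}, let V_I be the r×r submatrix of V formed by the rows indexed by I (in increasing order), and for r-element subsets I, J ⊆ {1,…,N} let H^I_J be the (N−r)×(N−r) submatrix of H obtained by deleting the rows indexed by I and the columns indexed by J (keeping the remaining rows and columns in increasing order). If I, J, I′, J′ are r-element subsets of {1,…,N} with det(V_I), det(V_J), det(V_{I′}), det(V_{J′}) all nonzero, then det(H^I_J) / (det(V_I) · det(V_J)) = ± det(H^{I′}_{J′}) / (det(V_{I′}) · det(V_{J′})), i.e. the two ratios are either equal or negatives of each other. -/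

import Mathlib

namespace Stmt14

/-- The r×r submatrix of V formed by the rows indexed by I, in increasing order. -/
noncomputable def rowSub {N r : ℕ} (V : Matrix (Fin N) (Fin r) ℂ)
    (I : Finset (Fin N)) (hI : I.card = r) : Matrix (Fin r) (Fin r) ℂ :=
  V.submatrix (fun t => (I.orderIsoOfFin hI t : Fin N)) id

/-- The (N−r)×(N−r) submatrix of H obtained by deleting the rows indexed by I and the
columns indexed by J, keeping the remaining rows and columns in increasing order. -/
noncomputable def delSub {N r : ℕ} (H : Matrix (Fin N) (Fin N) ℂ)
    (I J : Finset (Fin N)) (hI : I.card = r) (hJ : J.card = r) :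
    Matrix (Fin (N - r)) (Fin (N - r)) ℂ :=
  H.submatrix
    (fun t => (Iᶜ.orderIsoOfFin (by simp [Finset.card_compl, hI]) t : Fin N))
    (fun t => (Jᶜ.orderIsoOfFin (by simp [Finset.card_compl, hJ]) t : Fin N))

open Matrix

variable {N m r : ℕ}

/-- selection matrix: columns are the standard basis vectors `e_{f t}`. -/
def Emat {α : Type*} (f : α → Fin N) : Matrix (Fin N) α ℂ :=
  fun i t => if i = f t then 1 else 0

lemma Emat_t_mul {α β : Type*} (f : α → Fin N) (M : Matrix (Fin N) β ℂ) :
    (Emat f)ᵀ * M = M.submatrix f id := by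
  ext t j
  simp [Matrix.mul_apply, Emat, Matrix.transpose_apply, ite_mul]

lemma mul_Emat {α β : Type*} [Fintype β] [DecidableEq β] (f : α → Fin N)
    (M : Matrix β (Fin N) ℂ) : M * Emat f = M.submatrix id f := by
  ext j t
  simp [Matrix.mul_apply, Emat, mul_ite, Finset.sum_ite_eq]

lemma EtE {α : Type*} [Fintype α] [DecidableEq α] {f : α → Fin N}
    (hf : Function.Injective f) : (Emat f)ᵀ * Emat f = 1 := by
  ext s t
  simp only [Matrix.mul_apply, Emat, Matrix.transpose_apply, ite_mul, one_mul, zero_mul,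
    Finset.sum_ite_eq' Finset.univ (f s) (fun i => if i = f t then (1:ℂ) else 0),
    Finset.mem_univ, if_true]
  by_cases h : s = t
  · simp [h, Matrix.one_apply]
  · have : ¬ f s = f t := fun hc => h (hf hc)
    simp [Matrix.one_apply, h, this]

lemma EEt_bij {α : Type*} [Fintype α] {f : α → Fin N}
    (hf : Function.Bijective f) : Emat f * (Emat f)ᵀ = 1 := by
  ext i j
  obtain ⟨t₀, ht₀⟩ := hf.2 i
  simp only [Matrix.mul_apply, Emat, Matrix.transpose_apply]
  rw [Finset.sum_eq_single t₀]
  · by_cases h : i = j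
    · simp [← h, ← ht₀, Matrix.one_apply]
    · have : ¬ j = f t₀ := by rw [ht₀]; exact fun hc => h hc.symm
      simp [Matrix.one_apply, h, this]
  · intro b _ hb
    have : i ≠ f b := fun hc => hb (hf.1 (by rw [← hc, ht₀]))
    simp [this]
  · simp

lemma EEt_sum {α β : Type*} [Fintype α] [Fintype β] (h : α ⊕ β → Fin N) :
    Emat (h ∘ Sum.inl) * (Emat (h ∘ Sum.inl))ᵀ + Emat (h ∘ Sum.inr) * (Emat (h ∘ Sum.inr))ᵀ
      = Emat h * (Emat h)ᵀ := by
  ext i j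
  simp only [Matrix.add_apply, Matrix.mul_apply, Emat, Matrix.transpose_apply, Function.comp]
  rw [Fintype.sum_sum_type (fun t => (if i = h t then (1:ℂ) else 0) * (if j = h t then 1 else 0))]

lemma sub_eq {α : Type*} [Fintype α] {X Y : Matrix (Fin N) α ℂ} (e : α ≃ Fin N) :
    Xᵀ * Y = (X.submatrix ⇑e id)ᵀ * (Y.submatrix ⇑e id) := by
  ext i j
  simp only [Matrix.mul_apply, Matrix.transpose_apply, Matrix.submatrix_apply, id_eq]
  exact (Equiv.sum_comp e (fun n => X n i * Y n j)).symm

lemma det_sq {α : Type*} [Fintype α] [DecidableEq α] (e : α ≃ Fin N)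
    (Φ Ψ : Matrix (Fin N) α ℂ) :
    (Φᵀ * Ψ).det ^ 2 = (Φᵀ * Φ).det * (Ψᵀ * Ψ).det := by
  rw [sub_eq e (X := Φ) (Y := Ψ), sub_eq e (X := Φ) (Y := Φ), sub_eq e (X := Ψ) (Y := Ψ)]
  simp only [Matrix.det_mul, Matrix.det_transpose]
  ring

/-- The key invariance: for `A` with `AᵀW = 0`, the product of complementary minors
`det(A rows from e'∘inl) · det(W rows from e∘inr)` squared is symmetric in the two
partitions `e`, `e'` of the index set. -/
lemma key (A : Matrix (Fin N) (Fin m) ℂ) (W : Matrix (Fin N) (Fin r) ℂ)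
    (hAW : Aᵀ * W = 0) (e e' : (Fin m ⊕ Fin r) ≃ Fin N) :
    (((Emat (⇑e' ∘ Sum.inl))ᵀ * A).det * ((Emat (⇑e ∘ Sum.inr))ᵀ * W).det) ^ 2
      = (((Emat (⇑e ∘ Sum.inl))ᵀ * A).det * ((Emat (⇑e' ∘ Sum.inr))ᵀ * W).det) ^ 2 := by
  set f : Fin r → Fin N := ⇑e ∘ Sum.inr with hf
  set g : Fin m → Fin N := ⇑e ∘ Sum.inl with hg
  set f' : Fin r → Fin N := ⇑e' ∘ Sum.inr with hf'
  set g' : Fin m → Fin N := ⇑e' ∘ Sum.inl with hg'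
  have hfinj : Function.Injective f := e.injective.comp Sum.inr_injective
  have hg'inj : Function.Injective g' := e'.injective.comp Sum.inl_injective
  set Φ : Matrix (Fin N) (Fin m ⊕ Fin r) ℂ := Matrix.fromCols A (Emat f) with hΦ
  set Ψ : Matrix (Fin N) (Fin m ⊕ Fin r) ℂ := Matrix.fromCols (Emat g') W with hΨ
  have hcompl : Emat g * (Emat g)ᵀ = 1 - Emat f * (Emat f)ᵀ := by
    have := EEt_sum (⇑e)
    rw [EEt_bij e.bijective] at this
    rw [← hf, ← hg] at this
    linear_combination (norm := noncomm_ring) this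
  have hcompl' : Emat f' * (Emat f')ᵀ = 1 - Emat g' * (Emat g')ᵀ := by
    have := EEt_sum (⇑e')
    rw [EEt_bij e'.bijective] at this
    rw [← hf', ← hg'] at this
    linear_combination (norm := noncomm_ring) this
  have h1 : (Φᵀ * Ψ).det = ((Emat g')ᵀ * A).det * ((Emat f)ᵀ * W).det := by
    rw [hΦ, hΨ, Matrix.transpose_fromCols, Matrix.fromRows_mul_fromCols, hAW,
      Matrix.det_fromBlocks_zero₁₂]
    rw [show Aᵀ * Emat g' = ((Emat g')ᵀ * A)ᵀ by
        rw [Matrix.transpose_mul, Matrix.transpose_transpose],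
      Matrix.det_transpose]
  have h2 : (Φᵀ * Φ).det = ((Emat g)ᵀ * A).det ^ 2 := by
    rw [hΦ, Matrix.transpose_fromCols, Matrix.fromRows_mul_fromCols, EtE hfinj,
      Matrix.det_fromBlocks_one₂₂]
    have hEg : Emat g * ((Emat g)ᵀ * A) = A - Emat f * ((Emat f)ᵀ * A) := by
      rw [← Matrix.mul_assoc, ← Matrix.mul_assoc, hcompl, Matrix.sub_mul, Matrix.one_mul]
    have : Aᵀ * A - Aᵀ * Emat f * ((Emat f)ᵀ * A) = ((Emat g)ᵀ * A)ᵀ * ((Emat g)ᵀ * A) := by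
      rw [Matrix.transpose_mul, Matrix.transpose_transpose]
      conv_rhs => rw [Matrix.mul_assoc, hEg, Matrix.mul_sub, ← Matrix.mul_assoc]
    rw [this, Matrix.det_mul, Matrix.det_transpose, sq]
  have h3 : (Ψᵀ * Ψ).det = ((Emat f')ᵀ * W).det ^ 2 := by
    rw [hΨ, Matrix.transpose_fromCols, Matrix.fromRows_mul_fromCols, EtE hg'inj,
      Matrix.det_fromBlocks_one₁₁]
    have hEf' : Emat f' * ((Emat f')ᵀ * W) = W - Emat g' * ((Emat g')ᵀ * W) := by
      rw [← Matrix.mul_assoc, ← Matrix.mul_assoc, hcompl', Matrix.sub_mul, Matrix.one_mul]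
    have : Wᵀ * W - Wᵀ * Emat g' * ((Emat g')ᵀ * W) = ((Emat f')ᵀ * W)ᵀ * ((Emat f')ᵀ * W) := by
      rw [Matrix.transpose_mul, Matrix.transpose_transpose]
      conv_rhs => rw [Matrix.mul_assoc, hEf', Matrix.mul_sub, ← Matrix.mul_assoc]
    rw [this, Matrix.det_mul, Matrix.det_transpose, sq]
  have := det_sq e Φ Ψ
  rw [h1, h2, h3] at this
  rw [this, mul_pow]

/-- Rank factorization `H = A * B` with the columns of `A` lying in the range of `H`
and `A` injective. -/
lemma exists_fact (H : Matrix (Fin N) (Fin N) ℂ) {k : ℕ}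
    (hk : Module.finrank ℂ (LinearMap.range H.mulVecLin) = k) :
    ∃ (A : Matrix (Fin N) (Fin k) ℂ) (B : Matrix (Fin k) (Fin N) ℂ),
      H = A * B ∧ Function.Injective A.mulVec ∧
      ∀ t, ∃ y, H.mulVec y = fun i => A i t := by
  set U := LinearMap.range H.mulVecLin with hU
  let b : Module.Basis (Fin k) ℂ U := Module.finBasisOfFinrankEq ℂ U hk
  refine ⟨fun i t => (b t : Fin N → ℂ) i,
    fun t j => b.repr ⟨H.mulVec (Pi.single j 1), ⟨Pi.single j 1, rfl⟩⟩ t, ?_, ?_, ?_⟩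
  · ext i j
    set u : U := ⟨H.mulVec (Pi.single j 1), ⟨Pi.single j 1, rfl⟩⟩ with hu
    have hsum := b.sum_repr u
    have hcoe := congrFun (congrArg (Subtype.val) hsum) i
    have h1 : ((∑ t, b.repr u t • b t : U) : Fin N → ℂ) i
        = ∑ t, (b t : Fin N → ℂ) i * b.repr u t := by
      rw [Submodule.coe_sum, Finset.sum_apply]
      congr 1; funext t
      simp [mul_comm]
    have h2 : (u : Fin N → ℂ) i = H i j := by
      rw [hu]
      simp [Matrix.mulVec_single]
    rw [h1, h2] at hcoe
    rw [← hcoe]; rfl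
  · have hmv : ∀ x : Fin k → ℂ,
        Matrix.mulVec (fun i t => (b t : Fin N → ℂ) i) x
          = ((b.equivFun.symm x : U) : Fin N → ℂ) := by
      intro x
      funext i
      rw [Module.Basis.equivFun_symm_apply]
      have : ((∑ t, x t • b t : U) : Fin N → ℂ) i = ∑ t, (b t : Fin N → ℂ) i * x t := by
        rw [Submodule.coe_sum, Finset.sum_apply]
        congr 1; funext t; simp [mul_comm]
      rw [this]
      simp [Matrix.mulVec, dotProduct]
    intro x y hxy
    rw [hmv x, hmv y] at hxy
    exact b.equivFun.symm.injective (Subtype.ext hxy)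
  · intro t
    obtain ⟨y, hy⟩ := (b t).2
    exact ⟨y, by rw [← Matrix.mulVecLin_apply, hy]⟩

/-- the order-preserving parametrizations of `Iᶜ` and `I` assembled into an equivalence. -/
noncomputable def mkEquiv (I : Finset (Fin N)) (hI : I.card = r) (hr : r ≤ N) :
    (Fin (N - r) ⊕ Fin r) ≃ Fin N := by
  have hc : Iᶜ.card = N - r := by simp [Finset.card_compl, hI]
  refine Equiv.ofBijective
    (Sum.elim (fun t => (Iᶜ.orderIsoOfFin hc t : Fin N))
      (fun t => (I.orderIsoOfFin hI t : Fin N))) ?_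
  rw [Fintype.bijective_iff_injective_and_card]
  constructor
  · intro x y hxy
    match x, y with
    | Sum.inl x, Sum.inl y =>
        simp only [Sum.elim_inl] at hxy
        exact congrArg Sum.inl ((Iᶜ.orderIsoOfFin hc).injective (Subtype.ext hxy))
    | Sum.inl x, Sum.inr y =>
        exfalso
        have h1 : (Iᶜ.orderIsoOfFin hc x : Fin N) ∈ Iᶜ := (Iᶜ.orderIsoOfFin hc x).2
        have h2 : (I.orderIsoOfFin hI y : Fin N) ∈ I := (I.orderIsoOfFin hI y).2
        simp only [Sum.elim_inl, Sum.elim_inr] at hxy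
        rw [hxy] at h1
        exact (Finset.mem_compl.mp h1) h2
    | Sum.inr x, Sum.inl y =>
        exfalso
        have h1 : (Iᶜ.orderIsoOfFin hc y : Fin N) ∈ Iᶜ := (Iᶜ.orderIsoOfFin hc y).2
        have h2 : (I.orderIsoOfFin hI x : Fin N) ∈ I := (I.orderIsoOfFin hI x).2
        simp only [Sum.elim_inl, Sum.elim_inr] at hxy
        rw [← hxy] at h1
        exact (Finset.mem_compl.mp h1) h2
    | Sum.inr x, Sum.inr y =>
        simp only [Sum.elim_inr] at hxy
        exact congrArg Sum.inr ((I.orderIsoOfFin hI).injective (Subtype.ext hxy))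
  · simp [Nat.sub_add_cancel hr]

lemma rowSub_eq (V : Matrix (Fin N) (Fin r) ℂ) (I : Finset (Fin N)) (hI : I.card = r)
    (hr : r ≤ N) :
    (Emat (⇑(mkEquiv I hI hr) ∘ Sum.inr))ᵀ * V = rowSub V I hI := by
  rw [Emat_t_mul]; rfl

lemma delSub_eq (H : Matrix (Fin N) (Fin N) ℂ) (I J : Finset (Fin N))
    (hI : I.card = r) (hJ : J.card = r) (hr : r ≤ N) :
    delSub H I J hI hJ
      = ((Emat (⇑(mkEquiv I hI hr) ∘ Sum.inl))ᵀ * H) * Emat (⇑(mkEquiv J hJ hr) ∘ Sum.inl) := by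
  rw [Emat_t_mul, mul_Emat, Matrix.submatrix_submatrix]; rfl

/-- the reduced determinant det(H^I_J)/(det V_I · det V_J) is independent,
up to sign, of the choice of deleted rows I and columns J, whenever the corresponding
minors of the null-space matrix V are nonzero. -/
theorem stmt_14 (N r : ℕ) (hN : 1 ≤ N) (hr : r ≤ N)
    (H : Matrix (Fin N) (Fin N) ℂ) (hSymm : H.IsSymm)
    (V : Matrix (Fin N) (Fin r) ℂ)
    (hnull : LinearMap.ker H.mulVecLin = LinearMap.range V.mulVecLin)
    (I J I' J' : Finset (Fin N))
    (hI : I.card = r) (hJ : J.card = r) (hI' : I'.card = r) (hJ' : J'.card = r)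
    (dI : (rowSub V I hI).det ≠ 0) (dJ : (rowSub V J hJ).det ≠ 0)
    (dI' : (rowSub V I' hI').det ≠ 0) (dJ' : (rowSub V J' hJ').det ≠ 0) :
    (delSub H I J hI hJ).det / ((rowSub V I hI).det * (rowSub V J hJ).det)
        = (delSub H I' J' hI' hJ').det / ((rowSub V I' hI').det * (rowSub V J' hJ').det)
    ∨ (delSub H I J hI hJ).det / ((rowSub V I hI).det * (rowSub V J hJ).det)
        = -((delSub H I' J' hI' hJ').det / ((rowSub V I' hI').det * (rowSub V J' hJ').det)) := by
  -- V has full column rank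
  have Vinj : Function.Injective V.mulVecLin := by
    rw [← LinearMap.ker_eq_bot, LinearMap.ker_eq_bot']
    intro x hx
    have hx' : V.mulVec x = 0 := hx
    have h1 : (rowSub V I hI).mulVec x = 0 := by
      funext t
      have := congrFun hx' ((I.orderIsoOfFin hI t : Fin N))
      simpa [rowSub, Matrix.mulVec, dotProduct, Matrix.submatrix_apply] using this
    calc x = (1 : Matrix (Fin r) (Fin r) ℂ).mulVec x := (Matrix.one_mulVec x).symm
      _ = ((rowSub V I hI)⁻¹ * rowSub V I hI).mulVec x := by
          rw [Matrix.nonsing_inv_mul _ (isUnit_iff_ne_zero.mpr dI)]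
      _ = (rowSub V I hI)⁻¹.mulVec ((rowSub V I hI).mulVec x) :=
          (Matrix.mulVec_mulVec x _ _).symm
      _ = 0 := by rw [h1, Matrix.mulVec_zero]
  -- H * V = 0 and Vᵀ * H = 0
  have HV0 : H * V = 0 := by
    ext i j
    have hmem : (fun k => V k j) ∈ LinearMap.range V.mulVecLin :=
      ⟨Pi.single j 1, by funext i; simp [Matrix.mulVecLin_apply, Matrix.mulVec_single]⟩
    have hker : (fun k => V k j) ∈ LinearMap.ker H.mulVecLin := hnull ▸ hmem
    have h0 : H.mulVec (fun k => V k j) = 0 := hker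
    have h1 : (H * V) i j = H.mulVec (fun k => V k j) i := by
      simp [Matrix.mul_apply, Matrix.mulVec, dotProduct]
    rw [h1, h0]
    rfl
  have VtH0 : Vᵀ * H = 0 := by
    have : Vᵀ * Hᵀ = 0 := by
      rw [← Matrix.transpose_mul, HV0, Matrix.transpose_zero]
    rwa [hSymm.eq] at this
  -- rank of H is N - r
  have hker : Module.finrank ℂ (LinearMap.ker H.mulVecLin) = r := by
    rw [hnull, LinearMap.finrank_range_of_inj Vinj]
    exact Module.finrank_fin_fun ℂ
  have hrange : Module.finrank ℂ (LinearMap.range H.mulVecLin) = N - r := by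
    have h := LinearMap.finrank_range_add_finrank_ker H.mulVecLin
    rw [hker, Module.finrank_fin_fun] at h
    omega
  obtain ⟨A, B, hAB, hAinj, hAcol⟩ := exists_fact H hrange
  -- orthogonality relations
  have VtA : Vᵀ * A = 0 := by
    ext s t
    obtain ⟨y, hy⟩ := hAcol t
    have h1 : (Vᵀ * A) s t = (Vᵀ.mulVec (fun i => A i t)) s := by
      simp [Matrix.mul_apply, Matrix.mulVec, dotProduct, Matrix.transpose_apply]
    rw [h1, ← hy, Matrix.mulVec_mulVec, VtH0, Matrix.zero_mulVec]
    rfl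
  have AtV : Aᵀ * V = 0 := by
    have := congrArg Matrix.transpose VtA
    simpa [Matrix.transpose_mul] using this
  have BV : B * V = 0 := by
    have hABV : A * (B * V) = 0 := by rw [← Matrix.mul_assoc, ← hAB, HV0]
    ext t j
    have hc : A.mulVec (fun s => (B * V) s j) = 0 := by
      have h1 : A.mulVec (fun s => (B * V) s j) = fun i => (A * (B * V)) i j := by
        funext i; simp [Matrix.mulVec, dotProduct, Matrix.mul_apply]
      rw [h1, hABV]
      rfl
    have h2 : (fun s => (B * V) s j) = (0 : Fin (N - r) → ℂ) := by
      apply hAinj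
      rw [hc, Matrix.mulVec_zero]
    exact congrFun h2 t
  have BtV : Bᵀᵀ * V = 0 := by rwa [Matrix.transpose_transpose]
  -- the equivalences
  set eI := mkEquiv I hI hr with heI
  set eJ := mkEquiv J hJ hr with heJ
  set eI' := mkEquiv I' hI' hr with heI'
  set eJ' := mkEquiv J' hJ' hr with heJ'
  set aI : ℂ := ((Emat (⇑eI ∘ Sum.inl))ᵀ * A).det with haI
  set aI' : ℂ := ((Emat (⇑eI' ∘ Sum.inl))ᵀ * A).det with haI'
  set bJ : ℂ := ((Emat (⇑eJ ∘ Sum.inl))ᵀ * Bᵀ).det with hbJ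
  set bJ' : ℂ := ((Emat (⇑eJ' ∘ Sum.inl))ᵀ * Bᵀ).det with hbJ'
  set vI : ℂ := (rowSub V I hI).det with hvI
  set vJ : ℂ := (rowSub V J hJ).det with hvJ
  set vI' : ℂ := (rowSub V I' hI').det with hvI'
  set vJ' : ℂ := (rowSub V J' hJ').det with hvJ'
  -- determinant factorization of the reduced minors
  have hdet : ∀ (K L : Finset (Fin N)) (hK : K.card = r) (hL : L.card = r),
      (delSub H K L hK hL).det
        = ((Emat (⇑(mkEquiv K hK hr) ∘ Sum.inl))ᵀ * A).det
          * ((Emat (⇑(mkEquiv L hL hr) ∘ Sum.inl))ᵀ * Bᵀ).det := by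
    intro K L hK hL
    rw [delSub_eq H K L hK hL hr, hAB]
    have hassoc : ((Emat (⇑(mkEquiv K hK hr) ∘ Sum.inl))ᵀ * (A * B))
          * Emat (⇑(mkEquiv L hL hr) ∘ Sum.inl)
        = ((Emat (⇑(mkEquiv K hK hr) ∘ Sum.inl))ᵀ * A)
          * (B * Emat (⇑(mkEquiv L hL hr) ∘ Sum.inl)) := by
      rw [← Matrix.mul_assoc, ← Matrix.mul_assoc]
    rw [hassoc, Matrix.det_mul]
    congr 1
    have hBE : B * Emat (⇑(mkEquiv L hL hr) ∘ Sum.inl)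
        = ((Emat (⇑(mkEquiv L hL hr) ∘ Sum.inl))ᵀ * Bᵀ)ᵀ := by
      rw [Matrix.transpose_mul, Matrix.transpose_transpose, Matrix.transpose_transpose]
    rw [hBE, Matrix.det_transpose]
  -- the two key invariances
  have kI := key A V AtV eI eI'
  have kJ := key Bᵀ V BtV eJ eJ'
  rw [rowSub_eq V I hI hr, rowSub_eq V I' hI' hr] at kI
  rw [rowSub_eq V J hJ hr, rowSub_eq V J' hJ' hr] at kJ
  rw [← haI, ← haI', ← hvI, ← hvI'] at kI
  rw [← hbJ, ← hbJ', ← hvJ, ← hvJ'] at kJ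
  -- assemble
  have hd1 : (delSub H I J hI hJ).det = aI * bJ := hdet I J hI hJ
  have hd2 : (delSub H I' J' hI' hJ').det = aI' * bJ' := hdet I' J' hI' hJ'
  rw [hd1, hd2]
  set x : ℂ := aI * bJ / (vI * vJ) with hx
  set y : ℂ := aI' * bJ' / (vI' * vJ') with hy
  have hvIJ : vI * vJ ≠ 0 := mul_ne_zero dI dJ
  have hvIJ' : vI' * vJ' ≠ 0 := mul_ne_zero dI' dJ'
  have hsq : x ^ 2 = y ^ 2 := by
    rw [hx, hy, div_pow, div_pow,
      div_eq_div_iff (pow_ne_zero 2 hvIJ) (pow_ne_zero 2 hvIJ')]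
    linear_combination (-(bJ * vJ') ^ 2) * kI - (aI' * vI) ^ 2 * kJ
  have h0 : (x - y) * (x + y) = 0 := by linear_combination hsq
  rcases mul_eq_zero.mp h0 with h | h
  · exact Or.inl (sub_eq_zero.mp h)
  · exact Or.inr (eq_neg_of_add_eq_zero_left h)

end Stmt14
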